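/- Let Φ be a lattice in ℝ^d and μ a probability measure on Φ such that supp(μ) generates Φ as a group and supp(μ) ⊆ {u : ⟨v,u⟩ > 0} for some v ∈ ℝ^d. Then the following are equivalent: (a) the set D = {d ≥ 1 : ∃ n ≥ 1, ∃ z ∈ Φ with μ^{*n}({z}) > 0 and μ^{*(n+d)}({z}) > 0} is nonempty and the greatest common divisor of its elements is 1 (weak aperiodicity); (b) the subgroup of Φ generated by {u − w : u, w ∈ supp(μ)} is all of Φ. -/

import Mathlib

open MeasureTheory ENNReal

namespace CMTPaper

/-- The support of a measure on a countable discrete space: points of positive mass. -/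
def suppSet {V : Type*} [MeasurableSpace V] (μ : Measure V) : Set V := {z | μ {z} ≠ 0}

/-- `P` is the law on path space of the random walk `X_n = x + U_1 + ⋯ + U_n` with i.i.d.
increments of law `μ` (characterized by its cylinder probabilities). -/
def IsWalkLaw {V : Type*} [MeasurableSpace V] [AddGroup V] (μ : Measure V) (x : V)
    (P : Measure (ℕ → V)) : Prop :=
  ∀ (n : ℕ) (u : ℕ → V), u 0 = x →
    P {ω | ∀ i ≤ n, ω i = u i} = ∏ i ∈ Finset.range n, μ {u (i + 1) - u i}

-- The `n`-fold convolution power of `μ`, evaluated at singletons: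
-- `μ^{*0}{z} = 1_{z=0}` and `μ^{*(n+1)}{z} = Σ_y μ{y} · μ^{*n}{z - y}`.
open Classical in
noncomputable def convPow {V : Type*} [MeasurableSpace V] [AddGroup V] (μ : Measure V) :
    ℕ → V → ℝ≥0∞
  | 0, z => if z = 0 then 1 else 0
  | n + 1, z => ∑' y : V, μ {y} * convPow μ n (z - y)

/-- The set `D = {d ≥ 1 : ∃ n ≥ 1, ∃ z, μ^{*n}{z} > 0 and μ^{*(n+d)}{z} > 0}` appearing in
the weak aperiodicity condition. -/
def aperSet {V : Type*} [MeasurableSpace V] [AddGroup V] (μ : Measure V) : Set ℕ :=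
  {k | 1 ≤ k ∧ ∃ n : ℕ, 1 ≤ n ∧ ∃ z : V, 0 < convPow μ n z ∧ 0 < convPow μ (n + k) z}

section Aux
variable {V : Type*} [MeasurableSpace V] [AddCommGroup V]

inductive Reach (μ : Measure V) : ℕ → V → Prop
  | zero : Reach μ 0 0
  | succ {n : ℕ} {y z : V} : μ {y} ≠ 0 → Reach μ n z → Reach μ (n + 1) (y + z)

lemma Reach.eq_zero {μ : Measure V} {z : V} (h : Reach μ 0 z) : z = 0 := by
  cases h; rfl

lemma convPow_ne_zero_iff (μ : Measure V) : ∀ n (z : V), convPow μ n z ≠ 0 ↔ Reach μ n z := by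
  intro n
  induction n with
  | zero =>
    intro z
    by_cases hz : z = 0 <;> simp [convPow, hz]
    · exact Reach.zero
    · exact fun h => hz h.eq_zero
  | succ n ih =>
    intro z
    have hconv : convPow μ (n + 1) z = ∑' y : V, μ {y} * convPow μ n (z - y) := by
      simp [convPow]
    rw [hconv]
    constructor
    · intro h
      have : ∃ y, μ {y} * convPow μ n (z - y) ≠ 0 := by
        by_contra hc
        push_neg at hc
        exact h (ENNReal.tsum_eq_zero.mpr hc)
      obtain ⟨y, hy⟩ := this
      obtain ⟨h1, h2⟩ := mul_ne_zero_iff.mp hy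
      have := Reach.succ h1 ((ih _).mp h2)
      simpa using this
    · intro h
      cases h with
      | @succ _ y z' hy hr =>
        intro h0
        rw [ENNReal.tsum_eq_zero] at h0
        have := h0 y
        rw [add_sub_cancel_left] at this
        exact mul_ne_zero hy ((ih z').mpr hr) this

lemma Reach.add {μ : Measure V} {m n : ℕ} {a b : V} (ha : Reach μ m a) (hb : Reach μ n b) :
    Reach μ (m + n) (a + b) := by
  induction ha with
  | zero => simpa using hb
  | @succ k y z hy hr ih =>
    have := Reach.succ hy ih
    have e1 : k + 1 + n = (k + n) + 1 := by omega
    have e2 : y + z + b = y + (z + b) := by abel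
    rw [e1, e2]; exact this

lemma reach_one {μ : Measure V} {u : V} (h : μ {u} ≠ 0) : Reach μ 1 u := by
  simpa using Reach.succ h Reach.zero

lemma exists_reach_sub (μ : Measure V) {x : V}
    (hx : x ∈ AddSubgroup.closure {w : V | ∃ u ∈ suppSet μ, ∃ u' ∈ suppSet μ, w = u - u'}) :
    ∃ m A B, Reach μ m A ∧ Reach μ m B ∧ A - B = x := by
  induction hx using AddSubgroup.closure_induction with
  | mem w hw =>
    obtain ⟨u, hu, u', hu', rfl⟩ := hw
    exact ⟨1, u, u', reach_one hu, reach_one hu', rfl⟩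
  | zero => exact ⟨0, 0, 0, .zero, .zero, by simp⟩
  | add x y hx hy ihx ihy =>
    obtain ⟨m1, A1, B1, h1, h2, h3⟩ := ihx
    obtain ⟨m2, A2, B2, h4, h5, h6⟩ := ihy
    exact ⟨m1 + m2, A1 + A2, B1 + B2, h1.add h4, h2.add h5, by rw [← h3, ← h6]; abel⟩
  | neg x hx ihx =>
    obtain ⟨m, A, B, h1, h2, h3⟩ := ihx
    exact ⟨m, B, A, h2, h1, by rw [← h3]; abel⟩

lemma reach_image {μ : Measure V} {Q : Type*} [AddCommGroup Q] (f : V →+ Q) {c : Q}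
    (hf : ∀ y, μ {y} ≠ 0 → f y = c) {n : ℕ} {z : V} (h : Reach μ n z) : f z = n • c := by
  induction h with
  | zero => simp
  | @succ k y z' hy hr ih =>
    rw [map_add, hf y hy, ih, succ_nsmul]
    abel

end Aux

/-- For a lattice jump distribution whose support generates the lattice and
lies in an open half-space, weak aperiodicity is equivalent to the differences of support
points generating the lattice. -/
theorem weak_aperiodicity_iff_differences_generate {d : ℕ} (Φ : AddSubgroup (Fin d → ℝ))
    [DiscreteTopology Φ] (μ : Measure Φ) [IsProbabilityMeasure μ]
    (hgen : AddSubgroup.closure (suppSet μ) = ⊤)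
    (hhalf : ∃ v : Fin d → ℝ, ∀ u ∈ suppSet μ, 0 < ∑ i, v i * (u : Fin d → ℝ) i) :
    ((aperSet μ).Nonempty ∧ ∀ m : ℕ, (∀ k ∈ aperSet μ, m ∣ k) → m = 1) ↔
      AddSubgroup.closure
        {w : Φ | ∃ u ∈ suppSet μ, ∃ u' ∈ suppSet μ, w = u - u'} = ⊤ := by
  -- the support is nonempty
  have hne : ∃ u₀, u₀ ∈ suppSet μ := by
    by_contra h
    push_neg at h
    have hempty : suppSet μ = ∅ := Set.eq_empty_iff_forall_notMem.mpr h
    rw [hempty, AddSubgroup.closure_empty] at hgen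
    have hall : ∀ x : Φ, x = 0 := fun x => by
      have : x ∈ (⊥ : AddSubgroup Φ) := hgen ▸ AddSubgroup.mem_top x
      exact AddSubgroup.mem_bot.mp this
    have huniv : ({0} : Set Φ) = Set.univ := by
      apply Set.eq_univ_iff_forall.mpr
      intro x; simp [hall x]
    have : μ {0} ≠ 0 := by rw [huniv, measure_univ]; exact one_ne_zero
    exact h 0 this
  obtain ⟨u₀, hu₀⟩ := hne
  set S : Set Φ := {w : Φ | ∃ u ∈ suppSet μ, ∃ u' ∈ suppSet μ, w = u - u'} with hS
  set H := AddSubgroup.closure S with hHdef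
  constructor
  · rintro ⟨_, hgcd⟩
    set f := QuotientAddGroup.mk' H with hf
    have hc : ∀ y : Φ, μ {y} ≠ 0 → f y = f u₀ := by
      intro y hy
      have hmem : y - u₀ ∈ H := AddSubgroup.subset_closure ⟨y, hy, u₀, hu₀, rfl⟩
      exact (QuotientAddGroup.eq_iff_sub_mem.mpr hmem)
    have key : ∀ k ∈ aperSet μ, addOrderOf (f u₀) ∣ k := by
      intro k hk
      obtain ⟨hk1, n, hn1, z, hz1, hz2⟩ := hk
      have r1 := (convPow_ne_zero_iff μ n z).mp hz1.ne'
      have r2 := (convPow_ne_zero_iff μ (n + k) z).mp hz2.ne'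
      have e1 := reach_image f hc r1
      have e2 := reach_image f hc r2
      have hk0 : k • f u₀ = 0 := by
        have h3 : n • f u₀ = n • f u₀ + k • f u₀ := by
          rw [← add_nsmul]; exact e1.symm.trans e2
        exact (left_eq_add.mp h3)
      exact addOrderOf_dvd_of_nsmul_eq_zero hk0
    have h1 : addOrderOf (f u₀) = 1 := hgcd _ key
    have hc0 : f u₀ = 0 := AddMonoid.addOrderOf_eq_one_iff.mp h1
    apply le_antisymm le_top
    rw [← hgen]
    apply (AddSubgroup.closure_le _).mpr
    intro u hu
    exact (QuotientAddGroup.eq_zero_iff u).mp ((hc u hu).trans hc0)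
  · intro hH
    have hx : u₀ ∈ H := by rw [hH]; trivial
    obtain ⟨m, A, B, hA, hB, hAB⟩ := exists_reach_sub μ hx
    have hA' : Reach μ (m + 1) (u₀ + A) := Reach.succ hu₀ hA
    have hB' : Reach μ (m + 1) (u₀ + B) := Reach.succ hu₀ hB
    have hz2 : Reach μ (m + 2) (u₀ + (u₀ + B)) := Reach.succ hu₀ hB'
    have heq : u₀ + A = u₀ + (u₀ + B) := by
      have : A = u₀ + B := by rw [← hAB]; abel
      rw [this]
    have h1mem : (1 : ℕ) ∈ aperSet μ := by
      refine ⟨le_refl 1, m + 1, by omega, u₀ + A, ?_, ?_⟩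
      · exact pos_iff_ne_zero.mpr ((convPow_ne_zero_iff μ (m + 1) _).mpr hA')
      · have : Reach μ (m + 1 + 1) (u₀ + A) := by rw [heq]; exact hz2
        exact pos_iff_ne_zero.mpr ((convPow_ne_zero_iff μ (m + 1 + 1) _).mpr this)
    exact ⟨⟨1, h1mem⟩, fun m hm => Nat.dvd_one.mp (hm 1 h1mem)⟩

end CMTPaper
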